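/- With the notation of rank-sparsity incoherence, for every ρ > 0 the composed projection satisfies ‖P_Ω ∘ P_T‖_{♯(ρ)→♯(ρ)} ≤ α(ρ)β(ρ), where ‖·‖_{♯(ρ)→♯(ρ)} is the induced operator norm with respect to ‖M‖_{♯(ρ)} = max{ρ‖M‖_{1→1}, ρ^{-1}‖M‖_{∞→∞}}. -/

import Mathlib

open scoped BigOperators
open Matrix
noncomputable section

namespace SLR

/-- Trace inner product `⟨A,B⟩ = tr(AᵀB)`. -/
def inner' {m n : ℕ} (A B : Matrix (Fin m) (Fin n) ℝ) : ℝ := ∑ i, ∑ j, A i j * B i j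

/-- Entrywise 1-norm. -/
def l1 {m n : ℕ} (M : Matrix (Fin m) (Fin n) ℝ) : ℝ := ∑ i, ∑ j, |M i j|

/-- Entrywise ∞-norm (maximum absolute value of an entry). -/
def linf {m n : ℕ} (M : Matrix (Fin m) (Fin n) ℝ) : ℝ := ⨆ i, ⨆ j, |M i j|

/-- Frobenius norm. -/
def frob {m n : ℕ} (M : Matrix (Fin m) (Fin n) ℝ) : ℝ :=
  Real.sqrt (∑ i, ∑ j, (M i j) ^ 2)

/-- `‖M‖_{1→1}`: maximum column absolute sum. -/
def n11 {m n : ℕ} (M : Matrix (Fin m) (Fin n) ℝ) : ℝ := ⨆ j, ∑ i, |M i j|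

/-- `‖M‖_{∞→∞}`: maximum row absolute sum. -/
def nII {m n : ℕ} (M : Matrix (Fin m) (Fin n) ℝ) : ℝ := ⨆ i, ∑ j, |M i j|

/-- Spectral norm `‖M‖_{2→2}`. -/
def spec {m n : ℕ} (M : Matrix (Fin m) (Fin n) ℝ) : ℝ :=
  ‖LinearMap.toContinuousLinearMap (Matrix.toEuclideanLin M)‖

/-- Trace (nuclear) norm: sum of singular values. -/
def traceNorm {m n : ℕ} (M : Matrix (Fin m) (Fin n) ℝ) : ℝ :=
  ∑ i, Real.sqrt ((Matrix.isHermitian_conjTranspose_mul_self M).eigenvalues i)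

/-- The hybrid norm `‖M‖_{♯(ρ)} = max{ρ‖M‖_{1→1}, ρ⁻¹‖M‖_{∞→∞}}`. -/
def sharp {m n : ℕ} (ρ : ℝ) (M : Matrix (Fin m) (Fin n) ℝ) : ℝ :=
  max (ρ * n11 M) (ρ⁻¹ * nII M)

/-- The dual norm `‖·‖_{♭(ρ)}` of `‖·‖_{♯(ρ)}`. -/
def flat {m n : ℕ} (ρ : ℝ) (M : Matrix (Fin m) (Fin n) ℝ) : ℝ :=
  sSup {x : ℝ | ∃ N : Matrix (Fin m) (Fin n) ℝ, sharp ρ N ≤ 1 ∧ x = inner' M N}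

/-- Induced operator norm of a map `T` with respect to the norm `f`. -/
def opNormWrt {m n : ℕ} (f : Matrix (Fin m) (Fin n) ℝ → ℝ)
    (T : Matrix (Fin m) (Fin n) ℝ → Matrix (Fin m) (Fin n) ℝ) : ℝ :=
  sSup {x : ℝ | ∃ M, f M ≤ 1 ∧ x = f (T M)}

/-- Entrywise sign matrix. -/
def signM {m n : ℕ} (M : Matrix (Fin m) (Fin n) ℝ) : Matrix (Fin m) (Fin n) ℝ :=
  Matrix.of fun i j => Real.sign (M i j)

/-- Orthogonal projection onto matrices supported on `supp X`. -/
def POmega {m n : ℕ} (X : Matrix (Fin m) (Fin n) ℝ) (M : Matrix (Fin m) (Fin n) ℝ) :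
    Matrix (Fin m) (Fin n) ℝ :=
  Matrix.of fun i j => if X i j ≠ 0 then M i j else 0

/-- Orthogonal projection onto the tangent space `T` determined by `U`, `V`. -/
def PT {m n r : ℕ} (U : Matrix (Fin m) (Fin r) ℝ) (V : Matrix (Fin n) (Fin r) ℝ)
    (M : Matrix (Fin m) (Fin n) ℝ) : Matrix (Fin m) (Fin n) ℝ :=
  U * Uᵀ * M + M * (V * Vᵀ) - U * Uᵀ * M * (V * Vᵀ)

/-- `‖U‖_{2→∞}`: maximum row Euclidean norm. -/
def two2inf {m r : ℕ} (U : Matrix (Fin m) (Fin r) ℝ) : ℝ :=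
  ⨆ i, Real.sqrt (∑ k, (U i k) ^ 2)

/-- The sparsity measure `α(ρ)` of `X̄_S`. -/
def alpha {m n : ℕ} (X : Matrix (Fin m) (Fin n) ℝ) (ρ : ℝ) : ℝ :=
  max (ρ * n11 (signM X)) (ρ⁻¹ * nII (signM X))

/-- The incoherence measure `β(ρ)` of the singular vectors `U`, `V`. -/
def beta {m n r : ℕ} (U : Matrix (Fin m) (Fin r) ℝ) (V : Matrix (Fin n) (Fin r) ℝ)
    (ρ : ℝ) : ℝ :=
  ρ⁻¹ * linf (U * Uᵀ) + ρ * linf (V * Vᵀ) + two2inf U * two2inf V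

/-- Number of nonzero entries. -/
def suppCard {m n : ℕ} (X : Matrix (Fin m) (Fin n) ℝ) : ℕ :=
  (Finset.univ.filter fun p : Fin m × Fin n => X p.1 p.2 ≠ 0).card

/-! ### Auxiliary lemmas -/

lemma fsup_le {k : ℕ} {f : Fin k → ℝ} {c : ℝ} (hc : 0 ≤ c) (h : ∀ i, f i ≤ c) :
    (⨆ i, f i) ≤ c := by
  rcases isEmpty_or_nonempty (Fin k) with hk | hk
  · simpa using hc
  · exact ciSup_le h

lemma le_fsup {k : ℕ} (f : Fin k → ℝ) (i : Fin k) : f i ≤ ⨆ i, f i :=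
  le_ciSup (Set.Finite.bddAbove (Set.finite_range f)) i

lemma fsup_nonneg {k : ℕ} {f : Fin k → ℝ} (h : ∀ i, 0 ≤ f i) : 0 ≤ ⨆ i, f i := by
  rcases isEmpty_or_nonempty (Fin k) with hk | hk
  · simp
  · exact le_trans (h (Classical.arbitrary _)) (le_fsup f _)

lemma n11_nonneg {m n : ℕ} (M : Matrix (Fin m) (Fin n) ℝ) : 0 ≤ n11 M :=
  fsup_nonneg fun j => Finset.sum_nonneg fun i _ => abs_nonneg _

lemma nII_nonneg {m n : ℕ} (M : Matrix (Fin m) (Fin n) ℝ) : 0 ≤ nII M :=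
  fsup_nonneg fun i => Finset.sum_nonneg fun j _ => abs_nonneg _

lemma linf_nonneg {m n : ℕ} (M : Matrix (Fin m) (Fin n) ℝ) : 0 ≤ linf M :=
  fsup_nonneg fun i => fsup_nonneg fun j => abs_nonneg _

lemma two2inf_nonneg {m r : ℕ} (U : Matrix (Fin m) (Fin r) ℝ) : 0 ≤ two2inf U :=
  fsup_nonneg fun i => Real.sqrt_nonneg _

lemma sharp_nonneg {m n : ℕ} {ρ : ℝ} (hρ : 0 < ρ) (M : Matrix (Fin m) (Fin n) ℝ) :
    0 ≤ sharp ρ M :=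
  le_trans (mul_nonneg hρ.le (n11_nonneg M)) (le_max_left _ _)

lemma abs_le_linf {m n : ℕ} (M : Matrix (Fin m) (Fin n) ℝ) (i : Fin m) (j : Fin n) :
    |M i j| ≤ linf M :=
  le_trans (le_fsup (fun j => |M i j|) j) (le_fsup (fun i => ⨆ j, |M i j|) i)

lemma colsum_le_n11 {m n : ℕ} (M : Matrix (Fin m) (Fin n) ℝ) (j : Fin n) :
    ∑ i, |M i j| ≤ n11 M := le_fsup (fun j => ∑ i, |M i j|) j

lemma rowsum_le_nII {m n : ℕ} (M : Matrix (Fin m) (Fin n) ℝ) (i : Fin m) :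
    ∑ j, |M i j| ≤ nII M := le_fsup (fun i => ∑ j, |M i j|) i

lemma n11_le_sharp {m n : ℕ} {ρ : ℝ} (hρ : 0 < ρ) (M : Matrix (Fin m) (Fin n) ℝ) :
    n11 M ≤ ρ⁻¹ * sharp ρ M := by
  have h : ρ * n11 M ≤ sharp ρ M := le_max_left _ _
  rw [le_inv_mul_iff₀ hρ]
  exact h

lemma nII_le_sharp {m n : ℕ} {ρ : ℝ} (hρ : 0 < ρ) (M : Matrix (Fin m) (Fin n) ℝ) :
    nII M ≤ ρ * sharp ρ M := by
  have h : ρ⁻¹ * nII M ≤ sharp ρ M := le_max_right _ _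
  have := mul_le_mul_of_nonneg_left h hρ.le
  rwa [← mul_assoc, mul_inv_cancel₀ hρ.ne', one_mul] at this

/-- Cauchy–Schwarz, absolute value form. -/
lemma abs_sum_mul_le {k : ℕ} (x y : Fin k → ℝ) :
    |∑ i, x i * y i| ≤ Real.sqrt (∑ i, x i ^ 2) * Real.sqrt (∑ i, y i ^ 2) := by
  have h := Finset.sum_mul_sq_le_sq_mul_sq Finset.univ x y
  calc |∑ i, x i * y i| = Real.sqrt ((∑ i, x i * y i) ^ 2) := (Real.sqrt_sq_eq_abs _).symm
    _ ≤ Real.sqrt ((∑ i, x i ^ 2) * ∑ i, y i ^ 2) := Real.sqrt_le_sqrt h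
    _ = _ := Real.sqrt_mul (Finset.sum_nonneg fun _ _ => sq_nonneg _) _

/-- Isometry: `∑ᵢ (V y)ᵢ² = ∑ₐ yₐ²` when `VᵀV = 1`. -/
lemma iso_nrmSq {k r : ℕ} (V : Matrix (Fin k) (Fin r) ℝ) (hV : Vᵀ * V = 1)
    (y : Fin r → ℝ) : ∑ i, (∑ a, V i a * y a) ^ 2 = ∑ a, (y a) ^ 2 := by
  have key : ∀ a b : Fin r, ∑ i, V i a * V i b = if a = b then 1 else 0 := by
    intro a b
    have h := congrFun (congrFun hV a) b
    simpa [Matrix.mul_apply, Matrix.transpose_apply, Matrix.one_apply] using h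
  calc ∑ i, (∑ a, V i a * y a) ^ 2
      = ∑ i, ∑ a, ∑ b, (y a * y b) * (V i a * V i b) := by
        refine Finset.sum_congr rfl fun i _ => ?_
        rw [pow_two, Finset.sum_mul_sum]
        exact Finset.sum_congr rfl fun a _ => Finset.sum_congr rfl fun b _ => by ring
    _ = ∑ a, ∑ b, (y a * y b) * ∑ i, V i a * V i b := by
        rw [Finset.sum_comm]
        refine Finset.sum_congr rfl fun a _ => ?_
        rw [Finset.sum_comm]
        exact Finset.sum_congr rfl fun b _ => by rw [Finset.mul_sum]
    _ = ∑ a, (y a) ^ 2 := by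
        refine Finset.sum_congr rfl fun a _ => ?_
        simp only [key]
        simp [Finset.sum_ite_eq, pow_two]

/-- Contraction: `∑ₐ (Uᵀ x)ₐ² ≤ ∑ᵢ xᵢ²` when `UᵀU = 1`. -/
lemma contract_nrmSq {k r : ℕ} (U : Matrix (Fin k) (Fin r) ℝ) (hU : Uᵀ * U = 1)
    (x : Fin k → ℝ) : ∑ a, (∑ i, U i a * x i) ^ 2 ≤ ∑ i, (x i) ^ 2 := by
  set y : Fin r → ℝ := fun a => ∑ i, U i a * x i with hy
  have h1 : ∑ a, (y a) ^ 2 = ∑ i, x i * (∑ a, U i a * y a) := by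
    calc ∑ a, (y a) ^ 2 = ∑ a, ∑ i, y a * (U i a * x i) := by
          refine Finset.sum_congr rfl fun a _ => ?_
          rw [pow_two, hy, Finset.mul_sum]
      _ = ∑ i, ∑ a, y a * (U i a * x i) := Finset.sum_comm
      _ = ∑ i, x i * (∑ a, U i a * y a) := by
          refine Finset.sum_congr rfl fun i _ => ?_
          rw [Finset.mul_sum]
          exact Finset.sum_congr rfl fun a _ => by ring
  have h2 : |∑ i, x i * (∑ a, U i a * y a)| ≤
      Real.sqrt (∑ i, (x i) ^ 2) * Real.sqrt (∑ i, (∑ a, U i a * y a) ^ 2) :=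
    abs_sum_mul_le _ _
  have h3 : ∑ i, (∑ a, U i a * y a) ^ 2 = ∑ a, (y a) ^ 2 := iso_nrmSq U hU y
  set S := ∑ a, (y a) ^ 2 with hS
  set T := ∑ i, (x i) ^ 2 with hT
  have hSn : 0 ≤ S := Finset.sum_nonneg fun _ _ => sq_nonneg _
  have hTn : 0 ≤ T := Finset.sum_nonneg fun _ _ => sq_nonneg _
  have h4 : S ≤ Real.sqrt T * Real.sqrt S := by
    calc S = |∑ i, x i * (∑ a, U i a * y a)| := by rw [← h1, abs_of_nonneg hSn]
      _ ≤ Real.sqrt T * Real.sqrt (∑ i, (∑ a, U i a * y a) ^ 2) := h2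
      _ = Real.sqrt T * Real.sqrt S := by rw [h3]
  -- from `S ≤ √T √S` deduce `S ≤ T`
  have hs : Real.sqrt S ^ 2 = S := Real.sq_sqrt hSn
  have ht : Real.sqrt T ^ 2 = T := Real.sq_sqrt hTn
  have h5 : Real.sqrt S ≤ Real.sqrt T := by
    rcases eq_or_lt_of_le (Real.sqrt_nonneg S) with h0 | h0
    · rw [← h0]; exact Real.sqrt_nonneg T
    · have : Real.sqrt S * Real.sqrt S ≤ Real.sqrt T * Real.sqrt S := by
        nlinarith [h4, hs]
      exact le_of_mul_le_mul_right this h0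
  calc S = Real.sqrt S ^ 2 := hs.symm
    _ ≤ Real.sqrt T ^ 2 := by
        have := mul_le_mul h5 h5 (Real.sqrt_nonneg S) (Real.sqrt_nonneg T)
        simpa [pow_two] using this
    _ = T := ht

/-- `∑ᵢ (M z)ᵢ² ≤ ‖M‖₁₁ ‖M‖∞∞ ∑ₖ zₖ²`. -/
lemma mulVec_nrmSq_le {m n : ℕ} (M : Matrix (Fin m) (Fin n) ℝ) (z : Fin n → ℝ) :
    ∑ i, (∑ k, M i k * z k) ^ 2 ≤ n11 M * nII M * ∑ k, (z k) ^ 2 := by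
  have row : ∀ i : Fin m, (∑ k, M i k * z k) ^ 2 ≤
      (∑ k, |M i k|) * ∑ k, |M i k| * (z k) ^ 2 := by
    intro i
    have h := Finset.sum_mul_sq_le_sq_mul_sq Finset.univ
      (fun k => Real.sqrt |M i k|) (fun k => Real.sqrt |M i k| * |z k|)
    have e1 : (∑ k, Real.sqrt |M i k| * (Real.sqrt |M i k| * |z k|))
        = ∑ k, |M i k| * |z k| := by
      refine Finset.sum_congr rfl fun k _ => ?_
      rw [← mul_assoc, Real.mul_self_sqrt (abs_nonneg _)]
    have e2 : (∑ k, (Real.sqrt |M i k|) ^ 2) = ∑ k, |M i k| :=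
      Finset.sum_congr rfl fun k _ => Real.sq_sqrt (abs_nonneg _)
    have e3 : (∑ k, (Real.sqrt |M i k| * |z k|) ^ 2) = ∑ k, |M i k| * (z k) ^ 2 := by
      refine Finset.sum_congr rfl fun k _ => ?_
      rw [mul_pow, Real.sq_sqrt (abs_nonneg _), sq_abs]
    rw [e1, e2, e3] at h
    refine le_trans ?_ h
    have h1 : |∑ k, M i k * z k| ≤ ∑ k, |M i k| * |z k| := by
      refine le_trans (Finset.abs_sum_le_sum_abs _ _) ?_
      exact Finset.sum_le_sum fun k _ => le_of_eq (abs_mul _ _)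
    calc (∑ k, M i k * z k) ^ 2 = |∑ k, M i k * z k| ^ 2 := (sq_abs _).symm
      _ ≤ (∑ k, |M i k| * |z k|) ^ 2 := by
          exact pow_le_pow_left₀ (abs_nonneg _) h1 2
  have step1 : ∑ i, (∑ k, M i k * z k) ^ 2 ≤
      nII M * ∑ i, ∑ k, |M i k| * (z k) ^ 2 := by
    rw [Finset.mul_sum]
    refine Finset.sum_le_sum fun i _ => ?_
    refine le_trans (row i) ?_
    exact mul_le_mul_of_nonneg_right (rowsum_le_nII M i)
      (Finset.sum_nonneg fun k _ => mul_nonneg (abs_nonneg _) (sq_nonneg _))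
  have step2 : ∑ i, ∑ k, |M i k| * (z k) ^ 2 ≤ n11 M * ∑ k, (z k) ^ 2 := by
    rw [Finset.sum_comm, Finset.mul_sum]
    refine Finset.sum_le_sum fun k _ => ?_
    rw [← Finset.sum_mul]
    calc (∑ i, |M i k|) * (z k) ^ 2 ≤ n11 M * (z k) ^ 2 :=
          mul_le_mul_of_nonneg_right (colsum_le_n11 M k) (sq_nonneg _)
      _ = n11 M * (z k) ^ 2 := rfl
  calc ∑ i, (∑ k, M i k * z k) ^ 2 ≤ nII M * ∑ i, ∑ k, |M i k| * (z k) ^ 2 := step1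
    _ ≤ nII M * (n11 M * ∑ k, (z k) ^ 2) :=
        mul_le_mul_of_nonneg_left step2 (nII_nonneg M)
    _ = n11 M * nII M * ∑ k, (z k) ^ 2 := by ring

lemma sum4_perm {p q s t : ℕ} (f : Fin p → Fin q → Fin s → Fin t → ℝ) :
    ∑ l, ∑ b, ∑ k, ∑ a, f l b k a = ∑ a, ∑ k, ∑ l, ∑ b, f l b k a := by
  calc ∑ l, ∑ b, ∑ k, ∑ a, f l b k a
      = ∑ l, ∑ b, ∑ a, ∑ k, f l b k a :=
        Finset.sum_congr rfl fun l _ => Finset.sum_congr rfl fun b _ => Finset.sum_comm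
    _ = ∑ l, ∑ a, ∑ b, ∑ k, f l b k a :=
        Finset.sum_congr rfl fun l _ => Finset.sum_comm
    _ = ∑ a, ∑ l, ∑ b, ∑ k, f l b k a := Finset.sum_comm
    _ = ∑ a, ∑ l, ∑ k, ∑ b, f l b k a :=
        Finset.sum_congr rfl fun a _ => Finset.sum_congr rfl fun l _ => Finset.sum_comm
    _ = ∑ a, ∑ k, ∑ l, ∑ b, f l b k a :=
        Finset.sum_congr rfl fun a _ => Finset.sum_comm

/-- Ingredient 1: `‖P_Ω N‖_♯ ≤ α(ρ) ‖N‖_∞`. -/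
lemma sharp_POmega_le {m n : ℕ} (X N : Matrix (Fin m) (Fin n) ℝ) {ρ : ℝ} (hρ : 0 < ρ) :
    sharp ρ (POmega X N) ≤ alpha X ρ * linf N := by
  have hlinf : 0 ≤ linf N := linf_nonneg N
  have hentry : ∀ i j, |POmega X N i j| ≤ |signM X i j| * linf N := by
    intro i j
    by_cases h : X i j = 0
    · simp [POmega, signM, h]
    · have hs : |signM X i j| = 1 := by
        rcases lt_trichotomy (X i j) 0 with h0 | h0 | h0
        · simp [signM, Real.sign_of_neg h0]
        · exact absurd h0 h
        · simp [signM, Real.sign_of_pos h0]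
      rw [hs, one_mul]
      simpa [POmega, h] using abs_le_linf N i j
  have hn11 : n11 (POmega X N) ≤ n11 (signM X) * linf N := by
    refine fsup_le (mul_nonneg (n11_nonneg _) hlinf) fun j => ?_
    calc ∑ i, |POmega X N i j| ≤ ∑ i, |signM X i j| * linf N :=
          Finset.sum_le_sum fun i _ => hentry i j
      _ = (∑ i, |signM X i j|) * linf N := (Finset.sum_mul _ _ _).symm
      _ ≤ n11 (signM X) * linf N :=
          mul_le_mul_of_nonneg_right (colsum_le_n11 _ j) hlinf
  have hnII : nII (POmega X N) ≤ nII (signM X) * linf N := by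
    refine fsup_le (mul_nonneg (nII_nonneg _) hlinf) fun i => ?_
    calc ∑ j, |POmega X N i j| ≤ ∑ j, |signM X i j| * linf N :=
          Finset.sum_le_sum fun j _ => hentry i j
      _ = (∑ j, |signM X i j|) * linf N := (Finset.sum_mul _ _ _).symm
      _ ≤ nII (signM X) * linf N :=
          mul_le_mul_of_nonneg_right (rowsum_le_nII _ i) hlinf
  have h1 : ρ * n11 (POmega X N) ≤ alpha X ρ * linf N := by
    calc ρ * n11 (POmega X N) ≤ ρ * (n11 (signM X) * linf N) :=
          mul_le_mul_of_nonneg_left hn11 hρ.le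
      _ = (ρ * n11 (signM X)) * linf N := by ring
      _ ≤ alpha X ρ * linf N :=
          mul_le_mul_of_nonneg_right (le_max_left _ _) hlinf
  have h2 : ρ⁻¹ * nII (POmega X N) ≤ alpha X ρ * linf N := by
    calc ρ⁻¹ * nII (POmega X N) ≤ ρ⁻¹ * (nII (signM X) * linf N) :=
          mul_le_mul_of_nonneg_left hnII (inv_nonneg.mpr hρ.le)
      _ = (ρ⁻¹ * nII (signM X)) * linf N := by ring
      _ ≤ alpha X ρ * linf N :=
          mul_le_mul_of_nonneg_right (le_max_right _ _) hlinf
  exact max_le h1 h2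

/-- Ingredient 2: `‖P_T M‖_∞ ≤ β(ρ) ‖M‖_♯`. -/
lemma linf_PT_le {m n r : ℕ} (U : Matrix (Fin m) (Fin r) ℝ) (V : Matrix (Fin n) (Fin r) ℝ)
    (hU : Uᵀ * U = 1) (hV : Vᵀ * V = 1) (M : Matrix (Fin m) (Fin n) ℝ)
    {ρ : ℝ} (hρ : 0 < ρ) : linf (PT U V M) ≤ beta U V ρ * sharp ρ M := by
  have hsharp : 0 ≤ sharp ρ M := sharp_nonneg hρ M
  -- term 1 : |(UUᵀM) i j| ≤ linf (UUᵀ) * n11 M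
  have t1 : ∀ (i : Fin m) (j : Fin n),
      |(U * Uᵀ * M) i j| ≤ linf (U * Uᵀ) * n11 M := by
    intro i j
    rw [Matrix.mul_apply]
    calc |∑ k, (U * Uᵀ) i k * M k j| ≤ ∑ k, |(U * Uᵀ) i k * M k j| :=
          Finset.abs_sum_le_sum_abs _ _
      _ ≤ ∑ k, linf (U * Uᵀ) * |M k j| := by
          refine Finset.sum_le_sum fun k _ => ?_
          rw [abs_mul]
          exact mul_le_mul_of_nonneg_right (abs_le_linf _ i k) (abs_nonneg _)
      _ = linf (U * Uᵀ) * ∑ k, |M k j| := (Finset.mul_sum _ _ _).symm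
      _ ≤ linf (U * Uᵀ) * n11 M :=
          mul_le_mul_of_nonneg_left (colsum_le_n11 M j) (linf_nonneg _)
  -- term 2 : |(MVVᵀ) i j| ≤ linf (VVᵀ) * nII M
  have t2 : ∀ (i : Fin m) (j : Fin n),
      |(M * (V * Vᵀ)) i j| ≤ linf (V * Vᵀ) * nII M := by
    intro i j
    rw [Matrix.mul_apply]
    calc |∑ l, M i l * (V * Vᵀ) l j| ≤ ∑ l, |M i l * (V * Vᵀ) l j| :=
          Finset.abs_sum_le_sum_abs _ _
      _ ≤ ∑ l, |M i l| * linf (V * Vᵀ) := by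
          refine Finset.sum_le_sum fun l _ => ?_
          rw [abs_mul]
          exact mul_le_mul_of_nonneg_left (abs_le_linf _ l j) (abs_nonneg _)
      _ = (∑ l, |M i l|) * linf (V * Vᵀ) := (Finset.sum_mul _ _ _).symm
      _ ≤ nII M * linf (V * Vᵀ) :=
          mul_le_mul_of_nonneg_right (rowsum_le_nII M i) (linf_nonneg _)
      _ = linf (V * Vᵀ) * nII M := mul_comm _ _
  -- term 3 : |(UUᵀMVVᵀ) i j| ≤ two2inf U * two2inf V * sharp ρ M
  have t3 : ∀ (i : Fin m) (j : Fin n),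
      |(U * Uᵀ * M * (V * Vᵀ)) i j| ≤ two2inf U * two2inf V * sharp ρ M := by
    intro i j
    -- rewrite the entry as ⟨uᵢ, w⟩ with w = Uᵀ (M (V vⱼ))
    set s : Fin n → ℝ := fun l => ∑ b, V l b * V j b with hs
    set t : Fin m → ℝ := fun k => ∑ l, M k l * s l with ht
    set w : Fin r → ℝ := fun a => ∑ k, U k a * t k with hw
    have hentry : (U * Uᵀ * M * (V * Vᵀ)) i j = ∑ a, U i a * w a := by
      have L : (U * Uᵀ * M * (V * Vᵀ)) i j
          = ∑ l, ∑ b, ∑ k, ∑ a, U i a * U k a * M k l * (V l b * V j b) := by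
        simp only [Matrix.mul_apply, Matrix.transpose_apply, Finset.sum_mul, Finset.mul_sum]
        all_goals exact Finset.sum_congr rfl fun l _ => Finset.sum_congr rfl fun b _ =>
          Finset.sum_congr rfl fun k _ => Finset.sum_congr rfl fun a _ => by ring
      have R : ∑ a, U i a * w a
          = ∑ a, ∑ k, ∑ l, ∑ b, U i a * U k a * M k l * (V l b * V j b) := by
        simp only [hw, ht, hs, Finset.mul_sum]
        all_goals exact Finset.sum_congr rfl fun a _ => Finset.sum_congr rfl fun k _ =>
          Finset.sum_congr rfl fun l _ => Finset.sum_congr rfl fun b _ => by ring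
      rw [L, R]
      exact sum4_perm fun l b k a => U i a * U k a * M k l * (V l b * V j b)
    have hCS : |∑ a, U i a * w a| ≤
        Real.sqrt (∑ a, (U i a) ^ 2) * Real.sqrt (∑ a, (w a) ^ 2) :=
      abs_sum_mul_le _ _
    have hw2 : ∑ a, (w a) ^ 2 ≤ ∑ k, (t k) ^ 2 := contract_nrmSq U hU t
    have ht2 : ∑ k, (t k) ^ 2 ≤ n11 M * nII M * ∑ l, (s l) ^ 2 :=
      mulVec_nrmSq_le M s
    have hs2 : ∑ l, (s l) ^ 2 = ∑ b, (V j b) ^ 2 := iso_nrmSq V hV _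
    have hrowU : Real.sqrt (∑ a, (U i a) ^ 2) ≤ two2inf U :=
      le_fsup (fun i => Real.sqrt (∑ a, (U i a) ^ 2)) i
    have hrowV : Real.sqrt (∑ b, (V j b) ^ 2) ≤ two2inf V :=
      le_fsup (fun j => Real.sqrt (∑ b, (V j b) ^ 2)) j
    have hprod : n11 M * nII M ≤ sharp ρ M ^ 2 := by
      calc n11 M * nII M ≤ (ρ⁻¹ * sharp ρ M) * (ρ * sharp ρ M) := by
            refine mul_le_mul (n11_le_sharp hρ M) (nII_le_sharp hρ M)
              (nII_nonneg M) (mul_nonneg (inv_nonneg.mpr hρ.le) hsharp)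
        _ = (ρ⁻¹ * ρ) * sharp ρ M ^ 2 := by ring
        _ = sharp ρ M ^ 2 := by rw [inv_mul_cancel₀ hρ.ne', one_mul]
    have hwbound : Real.sqrt (∑ a, (w a) ^ 2) ≤
        sharp ρ M * Real.sqrt (∑ b, (V j b) ^ 2) := by
      have h : ∑ a, (w a) ^ 2 ≤ sharp ρ M ^ 2 * ∑ b, (V j b) ^ 2 := by
        refine le_trans hw2 (le_trans ht2 ?_)
        rw [hs2]
        exact mul_le_mul_of_nonneg_right hprod
          (Finset.sum_nonneg fun _ _ => sq_nonneg _)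
      calc Real.sqrt (∑ a, (w a) ^ 2) ≤
            Real.sqrt (sharp ρ M ^ 2 * ∑ b, (V j b) ^ 2) := Real.sqrt_le_sqrt h
        _ = sharp ρ M * Real.sqrt (∑ b, (V j b) ^ 2) := by
            rw [Real.sqrt_mul (sq_nonneg _), Real.sqrt_sq hsharp]
    calc |(U * Uᵀ * M * (V * Vᵀ)) i j| = |∑ a, U i a * w a| := by rw [hentry]
      _ ≤ Real.sqrt (∑ a, (U i a) ^ 2) * Real.sqrt (∑ a, (w a) ^ 2) := hCS
      _ ≤ Real.sqrt (∑ a, (U i a) ^ 2) *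
            (sharp ρ M * Real.sqrt (∑ b, (V j b) ^ 2)) :=
          mul_le_mul_of_nonneg_left hwbound (Real.sqrt_nonneg _)
      _ ≤ two2inf U * (sharp ρ M * two2inf V) := by
          refine mul_le_mul hrowU ?_ (mul_nonneg hsharp (Real.sqrt_nonneg _))
            (two2inf_nonneg U)
          exact mul_le_mul_of_nonneg_left hrowV hsharp
      _ = two2inf U * two2inf V * sharp ρ M := by ring
  -- assemble
  refine fsup_le (mul_nonneg ?_ hsharp) fun i => fsup_le (mul_nonneg ?_ hsharp) fun j => ?_
  · exact add_nonneg (add_nonneg (mul_nonneg (inv_nonneg.mpr hρ.le) (linf_nonneg _))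
      (mul_nonneg hρ.le (linf_nonneg _)))
      (mul_nonneg (two2inf_nonneg U) (two2inf_nonneg V))
  · exact add_nonneg (add_nonneg (mul_nonneg (inv_nonneg.mpr hρ.le) (linf_nonneg _))
      (mul_nonneg hρ.le (linf_nonneg _)))
      (mul_nonneg (two2inf_nonneg U) (two2inf_nonneg V))
  · have habs : |PT U V M i j| ≤ |(U * Uᵀ * M) i j| + |(M * (V * Vᵀ)) i j|
        + |(U * Uᵀ * M * (V * Vᵀ)) i j| := by
      have : PT U V M i j = (U * Uᵀ * M) i j + (M * (V * Vᵀ)) i j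
          - (U * Uᵀ * M * (V * Vᵀ)) i j := rfl
      rw [this]
      calc |(U * Uᵀ * M) i j + (M * (V * Vᵀ)) i j - (U * Uᵀ * M * (V * Vᵀ)) i j|
          ≤ |(U * Uᵀ * M) i j + (M * (V * Vᵀ)) i j| + |(U * Uᵀ * M * (V * Vᵀ)) i j| :=
            abs_sub _ _
        _ ≤ _ := by
            have := abs_add_le ((U * Uᵀ * M) i j) ((M * (V * Vᵀ)) i j)
            linarith
    refine le_trans habs ?_
    have b1 : |(U * Uᵀ * M) i j| ≤ (ρ⁻¹ * linf (U * Uᵀ)) * sharp ρ M := by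
      refine le_trans (t1 i j) ?_
      calc linf (U * Uᵀ) * n11 M ≤ linf (U * Uᵀ) * (ρ⁻¹ * sharp ρ M) :=
            mul_le_mul_of_nonneg_left (n11_le_sharp hρ M) (linf_nonneg _)
        _ = (ρ⁻¹ * linf (U * Uᵀ)) * sharp ρ M := by ring
    have b2 : |(M * (V * Vᵀ)) i j| ≤ (ρ * linf (V * Vᵀ)) * sharp ρ M := by
      refine le_trans (t2 i j) ?_
      calc linf (V * Vᵀ) * nII M ≤ linf (V * Vᵀ) * (ρ * sharp ρ M) :=
            mul_le_mul_of_nonneg_left (nII_le_sharp hρ M) (linf_nonneg _)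
        _ = (ρ * linf (V * Vᵀ)) * sharp ρ M := by ring
    have b3 := t3 i j
    rw [beta]
    nlinarith [b1, b2, b3]

/-- `‖P_Ω ∘ P_T‖_{♯(ρ)→♯(ρ)} ≤ α(ρ)β(ρ)`. -/
theorem POmega_comp_PT_sharp_opNorm {m n r : ℕ} (Xs : Matrix (Fin m) (Fin n) ℝ)
    (U : Matrix (Fin m) (Fin r) ℝ) (V : Matrix (Fin n) (Fin r) ℝ)
    (hU : Uᵀ * U = 1) (hV : Vᵀ * V = 1) (ρ : ℝ) (hρ : 0 < ρ) :
    opNormWrt (sharp ρ) (fun M => POmega Xs (PT U V M)) ≤ alpha Xs ρ * beta U V ρ := by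
  have hα : 0 ≤ alpha Xs ρ :=
    le_trans (mul_nonneg hρ.le (n11_nonneg _)) (le_max_left _ _)
  have hβ : 0 ≤ beta U V ρ :=
    add_nonneg (add_nonneg (mul_nonneg (inv_nonneg.mpr hρ.le) (linf_nonneg _))
      (mul_nonneg hρ.le (linf_nonneg _)))
      (mul_nonneg (two2inf_nonneg U) (two2inf_nonneg V))
  refine Real.sSup_le ?_ (mul_nonneg hα hβ)
  rintro x ⟨M, hM, rfl⟩
  calc sharp ρ (POmega Xs (PT U V M)) ≤ alpha Xs ρ * linf (PT U V M) :=
        sharp_POmega_le Xs (PT U V M) hρ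
    _ ≤ alpha Xs ρ * (beta U V ρ * sharp ρ M) :=
        mul_le_mul_of_nonneg_left (linf_PT_le U V hU hV M hρ) hα
    _ ≤ alpha Xs ρ * (beta U V ρ * 1) := by
        refine mul_le_mul_of_nonneg_left (mul_le_mul_of_nonneg_left hM hβ) hα
    _ = alpha Xs ρ * beta U V ρ := by ring

end SLR
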